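/- The decomposition Γ = V1 ⊕ V2 ⊕ V3 with V1 = span{a,b,c,d,e}, V2 = span{f,g}, V3 = span{h} is a grading of the Lie algebra Γ: [V_i, V_j] ⊆ V_{i+j} for all i, j (where V_k = 0 for k > 3). -/
import Mathlib


/-- The underlying 8-dimensional real vector space of Γ, with coordinates
`a,b,c,d,e,f,g,h` indexed by `0,…,7`. -/
def G3 : Type := Fin 8 → ℝ

noncomputable instance : AddCommGroup G3 := Pi.addCommGroup
noncomputable instance : Module ℝ G3 := Pi.module _ _ _

lemma G3.add_apply (x y : G3) (i : Fin 8) : (x + y) i = x i + y i := rfl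
lemma G3.smul_apply (t : ℝ) (x : G3) (i : Fin 8) : (t • x) i = t * x i := rfl
lemma G3.zero_apply (i : Fin 8) : (0 : G3) i = 0 := rfl

/-- The bracket determined by `[a,b]=[c,d]=f`, `[b,c]=[d,e]=g`, `[b,f]=[g,d]=h`. -/
def brkt (x y : G3) : G3 := fun i =>
  if i = 5 then x 0 * y 1 - x 1 * y 0 + x 2 * y 3 - x 3 * y 2
  else if i = 6 then x 1 * y 2 - x 2 * y 1 + x 3 * y 4 - x 4 * y 3
  else if i = 7 then x 1 * y 5 - x 5 * y 1 + x 6 * y 3 - x 3 * y 6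
  else 0

instance : Bracket G3 G3 := ⟨brkt⟩

lemma G3.lie_def (x y : G3) : ⁅x, y⁆ = brkt x y := rfl

noncomputable instance : LieRing G3 where
  add_lie x y z := by
    funext i; fin_cases i <;>
      simp [G3.lie_def, brkt, G3.add_apply] <;> ring
  lie_add x y z := by
    funext i; fin_cases i <;>
      simp [G3.lie_def, brkt, G3.add_apply] <;> ring
  lie_self x := by
    funext i; fin_cases i <;>
      simp [G3.lie_def, brkt, G3.zero_apply] <;> ring
  leibniz_lie x y z := by
    funext i; fin_cases i <;>
      simp [G3.lie_def, brkt, G3.add_apply] <;> ring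

noncomputable instance : LieAlgebra ℝ G3 where
  lie_smul t x y := by
    funext i; fin_cases i <;>
      simp [G3.lie_def, brkt, G3.smul_apply] <;> ring

/-- basis vector -/
def bv (j : Fin 8) : G3 := fun i => if i = j then 1 else 0

/-- The graded pieces `V1 = span{a,b,c,d,e}`, `V2 = span{f,g}`, `V3 = span{h}`,
with `V k = 0` otherwise. -/
noncomputable def Vg : ℕ → Submodule ℝ G3
  | 1 => Submodule.span ℝ {bv 0, bv 1, bv 2, bv 3, bv 4}
  | 2 => Submodule.span ℝ {bv 5, bv 6}
  | 3 => Submodule.span ℝ {bv 7}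
  | _ => ⊥


lemma coord_zero {s : Set G3} (i : Fin 8) (hs : ∀ z ∈ s, z i = 0) {x : G3}
    (hx : x ∈ Submodule.span ℝ s) : x i = 0 := by
  have h : Submodule.span ℝ s ≤ LinearMap.ker (LinearMap.proj (R := ℝ) (φ := fun _ : Fin 8 => ℝ) i) :=
    Submodule.span_le.mpr (fun z hz => hs z hz)
  exact h hx

lemma bv_apply (j i : Fin 8) : bv j i = if i = j then 1 else 0 := rfl

lemma brkt5 (x y : G3) : ⁅x, y⁆ 5 = x 0 * y 1 - x 1 * y 0 + x 2 * y 3 - x 3 * y 2 := by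
  simp [G3.lie_def, brkt]

lemma brkt6 (x y : G3) : ⁅x, y⁆ 6 = x 1 * y 2 - x 2 * y 1 + x 3 * y 4 - x 4 * y 3 := by
  simp [G3.lie_def, brkt]

lemma brkt7 (x y : G3) : ⁅x, y⁆ 7 = x 1 * y 5 - x 5 * y 1 + x 6 * y 3 - x 3 * y 6 := by
  simp [G3.lie_def, brkt]

lemma brkt0 (x y : G3) : ⁅x, y⁆ 0 = 0 := by simp [G3.lie_def, brkt]
lemma brkt1 (x y : G3) : ⁅x, y⁆ 1 = 0 := by simp [G3.lie_def, brkt]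
lemma brkt2 (x y : G3) : ⁅x, y⁆ 2 = 0 := by simp [G3.lie_def, brkt]
lemma brkt3 (x y : G3) : ⁅x, y⁆ 3 = 0 := by simp [G3.lie_def, brkt]
lemma brkt4 (x y : G3) : ⁅x, y⁆ 4 = 0 := by simp [G3.lie_def, brkt]

/-- coordinates of elements of V1 -/
lemma V1c {x : G3} (h : x ∈ Vg 1) : x 5 = 0 ∧ x 6 = 0 ∧ x 7 = 0 := by
  refine ⟨coord_zero 5 ?_ h, coord_zero 6 ?_ h, coord_zero 7 ?_ h⟩ <;>
    · rintro z (rfl | rfl | rfl | rfl | rfl) <;> simp [bv_apply]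

lemma V2c {x : G3} (h : x ∈ Vg 2) :
    x 0 = 0 ∧ x 1 = 0 ∧ x 2 = 0 ∧ x 3 = 0 ∧ x 4 = 0 ∧ x 7 = 0 := by
  refine ⟨coord_zero 0 ?_ h, coord_zero 1 ?_ h, coord_zero 2 ?_ h,
    coord_zero 3 ?_ h, coord_zero 4 ?_ h, coord_zero 7 ?_ h⟩ <;>
    · rintro z (rfl | rfl) <;> simp [bv_apply]

lemma V3c {x : G3} (h : x ∈ Vg 3) :
    x 0 = 0 ∧ x 1 = 0 ∧ x 2 = 0 ∧ x 3 = 0 ∧ x 4 = 0 ∧ x 5 = 0 ∧ x 6 = 0 := by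
  refine ⟨coord_zero 0 ?_ h, coord_zero 1 ?_ h, coord_zero 2 ?_ h, coord_zero 3 ?_ h,
    coord_zero 4 ?_ h, coord_zero 5 ?_ h, coord_zero 6 ?_ h⟩ <;>
    · rintro z rfl <;> simp [bv_apply]

lemma mem_V2 (x y : G3) (h7 : ⁅x, y⁆ 7 = 0) : ⁅x, y⁆ ∈ Vg 2 := by
  have hz : ⁅x, y⁆ = ⁅x, y⁆ 5 • bv 5 + ⁅x, y⁆ 6 • bv 6 := by
    funext i
    fin_cases i <;>
      simp [G3.add_apply, G3.smul_apply, bv_apply, h7, brkt0, brkt1, brkt2, brkt3, brkt4]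
  rw [hz]
  exact add_mem (Submodule.smul_mem _ _ (Submodule.subset_span (by simp)))
    (Submodule.smul_mem _ _ (Submodule.subset_span (by simp)))

lemma mem_V3 (x y : G3) (h5 : ⁅x, y⁆ 5 = 0) (h6 : ⁅x, y⁆ 6 = 0) : ⁅x, y⁆ ∈ Vg 3 := by
  have hz : ⁅x, y⁆ = ⁅x, y⁆ 7 • bv 7 := by
    funext i
    fin_cases i <;>
      simp [G3.smul_apply, bv_apply, h5, h6, brkt0, brkt1, brkt2, brkt3, brkt4]
  rw [hz]
  exact Submodule.smul_mem _ _ (Submodule.subset_span (by simp))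

lemma eq_zero' (x y : G3) (h5 : ⁅x, y⁆ 5 = 0) (h6 : ⁅x, y⁆ 6 = 0) (h7 : ⁅x, y⁆ 7 = 0) :
    ⁅x, y⁆ = 0 := by
  funext i
  fin_cases i <;>
    simp [G3.zero_apply, h5, h6, h7, brkt0, brkt1, brkt2, brkt3, brkt4]

lemma Vg_bot (n : ℕ) (hn : n = 0 ∨ 4 ≤ n) : Vg n = ⊥ := by
  rcases hn with rfl | hn
  · rfl
  · obtain ⟨m, rfl⟩ := Nat.exists_eq_add_of_le hn
    rw [show 4 + m = m + 4 from Nat.add_comm 4 m]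
    rfl

/-- The decomposition Γ = V1 ⊕ V2 ⊕ V3 is a grading: `[V_i, V_j] ⊆ V_{i+j}`
for all `i, j` (where `V_k = 0` for `k > 3`). -/
theorem stmt_5 : ∀ i j : ℕ, ∀ x ∈ Vg i, ∀ y ∈ Vg j, ⁅x, y⁆ ∈ Vg (i + j) := by
  intro i j x hx y hy
  by_cases hi : i = 0 ∨ 4 ≤ i
  · rw [Vg_bot i hi, Submodule.mem_bot] at hx
    subst hx; simp only [zero_lie]; exact Submodule.zero_mem _
  by_cases hj : j = 0 ∨ 4 ≤ j
  · rw [Vg_bot j hj, Submodule.mem_bot] at hy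
    subst hy; simp only [lie_zero]; exact Submodule.zero_mem _
  push_neg at hi hj
  obtain ⟨hi0, hi4⟩ := hi
  obtain ⟨hj0, hj4⟩ := hj
  have hi1 : 1 ≤ i := Nat.one_le_iff_ne_zero.mpr hi0
  have hj1 : 1 ≤ j := Nat.one_le_iff_ne_zero.mpr hj0
  have hi3 : i ≤ 3 := by omega
  have hj3 : j ≤ 3 := by omega
  interval_cases i <;> interval_cases j
  · -- 1 1
    exact mem_V2 x y (by rw [brkt7, (V1c hx).1, (V1c hx).2.1, (V1c hy).1, (V1c hy).2.1]; ring)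
  · -- 1 2
    obtain ⟨g0, g1, g2, g3, g4, _⟩ := V2c hy
    exact mem_V3 x y (by rw [brkt5, g0, g1, g2, g3]; ring) (by rw [brkt6, g1, g2, g3, g4]; ring)
  · -- 1 3
    rw [show Vg (1 + 3) = ⊥ from Vg_bot 4 (Or.inr le_rfl), Submodule.mem_bot]
    obtain ⟨g0, g1, g2, g3, g4, g5, g6⟩ := V3c hy
    obtain ⟨x5, x6, _⟩ := V1c hx
    exact eq_zero' x y (by rw [brkt5, g0, g1, g2, g3]; ring)
      (by rw [brkt6, g1, g2, g3, g4]; ring) (by rw [brkt7, g5, g6, x5, x6]; ring)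
  · -- 2 1
    obtain ⟨h0, h1, h2, h3, h4, _⟩ := V2c hx
    exact mem_V3 x y (by rw [brkt5, h0, h1, h2, h3]; ring) (by rw [brkt6, h1, h2, h3, h4]; ring)
  · -- 2 2
    rw [show Vg (2 + 2) = ⊥ from Vg_bot 4 (Or.inr le_rfl), Submodule.mem_bot]
    obtain ⟨h0, h1, h2, h3, h4, _⟩ := V2c hx
    obtain ⟨g0, g1, g2, g3, g4, _⟩ := V2c hy
    exact eq_zero' x y (by rw [brkt5, h0, h1, h2, h3]; ring)
      (by rw [brkt6, h1, h2, h3, h4]; ring) (by rw [brkt7, h1, h3, g1, g3]; ring)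
  · -- 2 3
    rw [show Vg (2 + 3) = ⊥ from Vg_bot 5 (Or.inr (by norm_num)), Submodule.mem_bot]
    obtain ⟨h0, h1, h2, h3, h4, _⟩ := V2c hx
    obtain ⟨g0, g1, g2, g3, g4, g5, g6⟩ := V3c hy
    exact eq_zero' x y (by rw [brkt5, h0, h1, h2, h3]; ring)
      (by rw [brkt6, h1, h2, h3, h4]; ring) (by rw [brkt7, h1, h3, g1, g3]; ring)
  · -- 3 1
    rw [show Vg (3 + 1) = ⊥ from Vg_bot 4 (Or.inr le_rfl), Submodule.mem_bot]
    obtain ⟨h0, h1, h2, h3, h4, h5, h6⟩ := V3c hx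
    obtain ⟨g5, g6, _⟩ := V1c hy
    exact eq_zero' x y (by rw [brkt5, h0, h1, h2, h3]; ring)
      (by rw [brkt6, h1, h2, h3, h4]; ring) (by rw [brkt7, h1, h3, h5, h6]; ring)
  · -- 3 2
    rw [show Vg (3 + 2) = ⊥ from Vg_bot 5 (Or.inr (by norm_num)), Submodule.mem_bot]
    obtain ⟨h0, h1, h2, h3, h4, h5, h6⟩ := V3c hx
    obtain ⟨g0, g1, g2, g3, g4, _⟩ := V2c hy
    exact eq_zero' x y (by rw [brkt5, h0, h1, h2, h3]; ring)
      (by rw [brkt6, h1, h2, h3, h4]; ring) (by rw [brkt7, h1, h3, g1, g3]; ring)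
  · -- 3 3
    rw [show Vg (3 + 3) = ⊥ from Vg_bot 6 (Or.inr (by norm_num)), Submodule.mem_bot]
    obtain ⟨h0, h1, h2, h3, h4, h5, h6⟩ := V3c hx
    obtain ⟨g0, g1, g2, g3, g4, g5, g6⟩ := V3c hy
    exact eq_zero' x y (by rw [brkt5, h0, h1, h2, h3]; ring)
      (by rw [brkt6, h1, h2, h3, h4]; ring) (by rw [brkt7, h1, h3, g1, g3]; ring)
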